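/- Let X be a finite set with Nat.card X = p, and let νS be the Schröder norm on the Cartesian (1,2)-magma W X generated by X. Then for every n ≥ 1, the number of elements of norm n, namely Nat.card {w : W X // νS w = n}, equals the little p-Schröder number S p (n-1). -/
import Mathlib


universe u

/-- The Cartesian (1,2)-magma generated by `X`: planar unary–binary trees with leaves
labelled by `X`, with the unary map `un` and the binary map `bin`. -/
inductive W (X : Type u) : Type u
  | leaf : X → W X
  | un : W X → W X
  | bin : W X → W X → W X

/-- The Schröder norm on the Cartesian (1,2)-magma `W X`:
`νS (leaf x) = 1`, `νS (un w) = νS w + 1`, `νS (bin w w') = νS w + νS w'`. -/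
def schroderNorm {X : Type u} : W X → ℕ
  | .leaf _ => 1
  | .un w => schroderNorm w + 1
  | .bin w w' => schroderNorm w + schroderNorm w'

namespace Stmt16Aux

variable {X : Type u}

lemma one_le_norm (w : W X) : 1 ≤ schroderNorm w := by
  induction w with
  | leaf x => simp [schroderNorm]
  | un w ih => simp [schroderNorm]
  | bin w w' ih ih' => simp [schroderNorm]; omega

def leafEquiv : {w : W X // schroderNorm w = 1} ≃ X where
  toFun := fun ⟨w, h⟩ =>
    match w, h with
    | .leaf x, _ => x
    | .un w, h => absurd h (by have := one_le_norm w; simp [schroderNorm]; omega)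
    | .bin w w', h => absurd h (by have := one_le_norm w; have := one_le_norm w'; simp [schroderNorm]; omega)
  invFun := fun x => ⟨.leaf x, rfl⟩
  left_inv := fun ⟨w, h⟩ => by
    match w, h with
    | .leaf x, _ => rfl
    | .un w, h => exact absurd h (by have := one_le_norm w; simp [schroderNorm]; omega)
    | .bin w w', h => exact absurd h (by have := one_le_norm w; have := one_le_norm w'; simp [schroderNorm]; omega)
  right_inv := fun x => rfl

def decompEquiv (n : ℕ) :
    {w : W X // schroderNorm w = n + 2} ≃
      {w : W X // schroderNorm w = n + 1} ⊕
        (Σ k : Fin (n + 1), {w : W X // schroderNorm w = (k : ℕ) + 1} ×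
          {w : W X // schroderNorm w = n + 1 - (k : ℕ)}) where
  toFun := fun ⟨w, h⟩ =>
    match w, h with
    | .leaf _, h => absurd h (by simp [schroderNorm])
    | .un w, h => Sum.inl ⟨w, by simp [schroderNorm] at h; omega⟩
    | .bin w w', h => Sum.inr ⟨⟨schroderNorm w - 1, by
        have := one_le_norm w; have := one_le_norm w'
        simp [schroderNorm] at h; omega⟩,
      ⟨w, by have := one_le_norm w; simp; omega⟩,
      ⟨w', by have := one_le_norm w; have := one_le_norm w'
              simp [schroderNorm] at h; simp; omega⟩⟩
  invFun := fun s =>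
    match s with
    | Sum.inl ⟨w, h⟩ => ⟨.un w, by simp [schroderNorm, h]⟩
    | Sum.inr ⟨⟨k, hk⟩, ⟨w, h⟩, ⟨w', h'⟩⟩ => ⟨.bin w w', by simp [schroderNorm, h, h']; omega⟩
  left_inv := fun ⟨w, h⟩ => by
    match w, h with
    | .leaf _, h => exact absurd h (by simp [schroderNorm])
    | .un w, h => rfl
    | .bin w w', h => rfl
  right_inv := fun s => by
    match s with
    | Sum.inl ⟨w, h⟩ => rfl
    | Sum.inr ⟨⟨k, hk⟩, ⟨w, h⟩, ⟨w', h'⟩⟩ =>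
      simp only [Fin.val_mk] at h h'
      have hk' : schroderNorm w - 1 = k := by omega
      subst hk'
      rfl

lemma finiteT [Finite X] : ∀ n : ℕ, Finite {w : W X // schroderNorm w = n} := by
  intro n
  induction n using Nat.strong_induction_on with
  | _ n ih =>
    match n with
    | 0 =>
      haveI : IsEmpty {w : W X // schroderNorm w = 0} :=
        ⟨fun ⟨w, h⟩ => by have := one_le_norm w; omega⟩
      infer_instance
    | 1 => exact Finite.of_equiv X leafEquiv.symm
    | (n + 2) =>
      haveI h1 : Finite {w : W X // schroderNorm w = n + 1} := ih _ (by omega)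
      haveI h2 : ∀ k : Fin (n + 1), Finite {w : W X // schroderNorm w = (k : ℕ) + 1} :=
        fun k => ih _ (by omega)
      haveI h3 : ∀ k : Fin (n + 1), Finite {w : W X // schroderNorm w = n + 1 - (k : ℕ)} :=
        fun k => ih _ (by omega)
      exact Finite.of_equiv _ (decompEquiv n).symm

lemma card_succ [Finite X] (n : ℕ) :
    Nat.card {w : W X // schroderNorm w = n + 2} =
      Nat.card {w : W X // schroderNorm w = n + 1} +
        ∑ k ∈ Finset.range (n + 1),
          Nat.card {w : W X // schroderNorm w = k + 1} *
            Nat.card {w : W X // schroderNorm w = n + 1 - k} := by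
  haveI := fun m => finiteT (X := X) m
  rw [Nat.card_congr (decompEquiv n), Nat.card_sum]
  congr 1
  haveI : ∀ k : ℕ,
      Fintype ({w : W X // schroderNorm w = k + 1} ×
        {w : W X // schroderNorm w = n + 1 - k}) := fun k => Fintype.ofFinite _
  rw [Nat.card_eq_fintype_card, Fintype.card_sigma]
  rw [Fin.sum_univ_eq_sum_range
    (fun k => Fintype.card ({w : W X // schroderNorm w = k + 1} ×
      {w : W X // schroderNorm w = n + 1 - k}))]
  refine Finset.sum_congr rfl fun k _ => ?_
  rw [← Nat.card_eq_fintype_card, Nat.card_prod]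

end Stmt16Aux


/-- On the Cartesian (1,2)-magma `W X` generated by a finite set `X`
with `Nat.card X = p`, equipped with the Schröder norm, the number of elements of norm
`n ≥ 1` is the little `p`-Schröder number `S p (n-1)`, where the little `p`-Schröder
numbers are defined by `S p 0 = p` and
`S p n = S p (n-1) + ∑_{k=0}^{n-1} S p k · S p (n-1-k)` for `n ≥ 1`. -/
theorem stmt16 {X : Type u} [Finite X] (p : ℕ) (hX : Nat.card X = p)
    (S : ℕ → ℕ) (hS0 : S 0 = p)
    (hS : ∀ m : ℕ, S (m + 1) = S m + ∑ k ∈ Finset.range (m + 1), S k * S (m - k))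
    (n : ℕ) (hn : 1 ≤ n) :
    Nat.card {w : W X // schroderNorm w = n} = S (n - 1) := by
  have key : ∀ m : ℕ, Nat.card {w : W X // schroderNorm w = m + 1} = S m := by
    intro m
    induction m using Nat.strong_induction_on with
    | _ m ih =>
      match m with
      | 0 => rw [Nat.card_congr Stmt16Aux.leafEquiv, hX, hS0]
      | (m + 1) =>
        rw [Stmt16Aux.card_succ, hS, ih m (by omega)]
        congr 1
        refine Finset.sum_congr rfl fun k hk => ?_
        have hkm : k ≤ m := by simpa using Nat.lt_succ_iff.mp (Finset.mem_range.mp hk)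
        rw [ih k (by omega)]
        have : m + 1 - k = (m - k) + 1 := by omega
        rw [this, ih (m - k) (by omega)]
  have hn' : n = (n - 1) + 1 := by omega
  rw [hn']
  exact key (n - 1)
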